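/- Let p > 2 be a real number. Then the function g(u) := (1+u)/(1+u^p)^{1/p} is nondecreasing and concave on the interval [0,1]. -/

import Mathlib

open Real Set

lemma stmt_19_aux (p : ℝ) (hp : 2 < p) {u : ℝ} (hu : 0 ≤ u) :
    HasDerivAt (fun u : ℝ => (1 + u) / (1 + u ^ p) ^ (1 / p))
      ((1 - u ^ (p - 1)) * (1 + u ^ p) ^ (-(1 / p) - 1)) u := by
  have hp0 : (0:ℝ) < p := by linarith
  have hp1 : (1:ℝ) ≤ p := by linarith
  have hA : 0 < 1 + u ^ p := by
    have : 0 ≤ u ^ p := Real.rpow_nonneg hu p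
    linarith
  have h1 : HasDerivAt (fun u : ℝ => 1 + u ^ p) (p * u ^ (p - 1)) u := by
    simpa using (Real.hasDerivAt_rpow_const (p := p) (x := u) (Or.inr hp1)).const_add 1
  have h3 : HasDerivAt (fun u : ℝ => (1 + u ^ p) ^ (1 / p))
      ((p * u ^ (p - 1)) * (1 / p) * (1 + u ^ p) ^ (1 / p - 1)) u :=
    h1.rpow_const (Or.inl hA.ne')
  have hBpos : 0 < (1 + u ^ p) ^ (1 / p) := Real.rpow_pos_of_pos hA _
  have h4 : HasDerivAt (fun u : ℝ => 1 + u) 1 u := by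
    simpa using (hasDerivAt_id u).const_add 1
  have h5 := h4.div h3 hBpos.ne'
  refine HasDerivAt.congr_deriv h5 ?_
  symm
  have hmul : u * u ^ (p - 1) = u ^ p := by
    rcases eq_or_lt_of_le hu with h | h
    · rw [← h, Real.zero_rpow (by linarith), Real.zero_rpow (by linarith), mul_zero]
    · have h2 := Real.rpow_add h 1 (p - 1)
      rw [Real.rpow_one] at h2
      have h3' : (1:ℝ) + (p - 1) = p := by ring
      rw [h3'] at h2
      exact h2.symm
  have hsq : ((1 + u ^ p) ^ (1 / p)) ^ 2 = (1 + u ^ p) ^ (2 / p) := by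
    rw [← Real.rpow_natCast ((1 + u ^ p) ^ (1 / p)) 2, ← Real.rpow_mul hA.le]
    norm_num
    ring_nf
  have key : (1 + u ^ p) ^ (1 / p) = (1 + u ^ p) * (1 + u ^ p) ^ (1 / p - 1) := by
    have h2 := Real.rpow_add hA 1 (1 / p - 1)
    rw [Real.rpow_one] at h2
    have h3' : (1:ℝ) + (1 / p - 1) = 1 / p := by ring
    rw [h3'] at h2
    exact h2
  have hC : p * u ^ (p - 1) * (1 / p) = u ^ (p - 1) := by
    field_simp
  have hpow : (1 + u ^ p) ^ (-(1 / p) - 1)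
      = (1 + u ^ p) ^ (1 / p - 1) / (1 + u ^ p) ^ (2 / p) := by
    rw [← Real.rpow_sub hA]
    ring_nf
  have hnum2 : (1 + u ^ p) - (1 + u) * u ^ (p - 1) = 1 - u ^ (p - 1) := by
    have h2 : (1 + u) * u ^ (p - 1) = u ^ (p - 1) + u ^ p := by
      rw [add_mul, one_mul, hmul]
    linarith
  rw [hpow, hsq, one_mul, key, hC]
  rw [eq_div_iff (ne_of_gt (Real.rpow_pos_of_pos hA (2 / p)))]
  have hd : (1 + u ^ p) ^ (1 / p - 1) / (1 + u ^ p) ^ (2 / p) * (1 + u ^ p) ^ (2 / p)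
      = (1 + u ^ p) ^ (1 / p - 1) :=
    div_mul_cancel₀ _ (ne_of_gt (Real.rpow_pos_of_pos hA (2 / p)))
  rw [mul_assoc, hd]
  linear_combination ((1 + u ^ p) ^ (1 / p - 1)) * hnum2 + 2 * ((1 + u ^ p) ^ (1 / p - 1)) * hmul

theorem stmt_19 (p : ℝ) (hp : 2 < p) :
    MonotoneOn (fun u : ℝ => (1 + u) / (1 + u ^ p) ^ (1 / p)) (Set.Icc 0 1) ∧
      ConcaveOn ℝ (Set.Icc 0 1) (fun u : ℝ => (1 + u) / (1 + u ^ p) ^ (1 / p)) := by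
  set f : ℝ → ℝ := fun u => (1 + u) / (1 + u ^ p) ^ (1 / p) with hf
  have hcont : ContinuousOn f (Set.Icc 0 1) := fun x hx =>
    ((stmt_19_aux p hp hx.1).continuousAt).continuousWithinAt
  have hint : interior (Set.Icc (0:ℝ) 1) = Set.Ioo 0 1 := interior_Icc
  have hdiff : DifferentiableOn ℝ f (interior (Set.Icc (0:ℝ) 1)) := by
    rw [hint]
    exact fun x hx => (stmt_19_aux p hp hx.1.le).differentiableAt.differentiableWithinAt
  have hderiv : ∀ x ∈ Set.Ioo (0:ℝ) 1,
      deriv f x = (1 - x ^ (p - 1)) * (1 + x ^ p) ^ (-(1 / p) - 1) := fun x hx =>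
    (stmt_19_aux p hp hx.1.le).deriv
  have hnonneg : ∀ x ∈ Set.Ioo (0:ℝ) 1, 0 ≤ deriv f x := by
    intro x hx
    rw [hderiv x hx]
    have h1 : x ^ (p - 1) ≤ 1 := Real.rpow_le_one hx.1.le hx.2.le (by linarith)
    have h2 : (0:ℝ) < 1 + x ^ p := by
      have : 0 ≤ x ^ p := Real.rpow_nonneg hx.1.le p
      linarith
    have := Real.rpow_pos_of_pos h2 (-(1 / p) - 1)
    nlinarith
  have hanti : AntitoneOn (deriv f) (interior (Set.Icc (0:ℝ) 1)) := by
    rw [hint]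
    intro x hx y hy hxy
    rw [hderiv x hx, hderiv y hy]
    have hx0 := hx.1.le
    have hAx : (0:ℝ) < 1 + x ^ p := by
      have : 0 ≤ x ^ p := Real.rpow_nonneg hx0 p; linarith
    have hAy : (0:ℝ) < 1 + y ^ p := by
      have : 0 ≤ y ^ p := Real.rpow_nonneg hy.1.le p; linarith
    have h1 : 1 - y ^ (p - 1) ≤ 1 - x ^ (p - 1) := by
      have := Real.rpow_le_rpow hx0 hxy (by linarith : (0:ℝ) ≤ p - 1)
      linarith
    have h1x : x ^ (p - 1) ≤ 1 := Real.rpow_le_one hx0 hx.2.le (by linarith)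
    have h2 : (1 + y ^ p) ^ (-(1 / p) - 1) ≤ (1 + x ^ p) ^ (-(1 / p) - 1) := by
      apply Real.rpow_le_rpow_of_nonpos hAx
      · have := Real.rpow_le_rpow hx0 hxy (by positivity : (0:ℝ) ≤ p)
        linarith
      · have : 0 < 1 / p := by positivity
        linarith
    have h4 : 0 ≤ (1 + y ^ p) ^ (-(1 / p) - 1) := (Real.rpow_pos_of_pos hAy _).le
    exact mul_le_mul h1 h2 h4 (by linarith)
  exact ⟨monotoneOn_of_deriv_nonneg (convex_Icc 0 1) hcont hdiff (by rw [hint]; exact hnonneg),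
    hanti.concaveOn_of_deriv (convex_Icc 0 1) hcont hdiff⟩
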